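/- Let T : H → K be a bounded linear bijection between real Hilbert spaces such that ‖T S T⁻¹‖ ≤ ‖S‖ for all invertible bounded linear operators S on H. Then ‖Tx‖ = ‖T‖·‖x‖ for all x ∈ H. -/

import Mathlib

open scoped RealInnerProductSpace

section
variable {H K : Type*} [NormedAddCommGroup H] [InnerProductSpace ℝ H] [CompleteSpace H]
    [NormedAddCommGroup K] [InnerProductSpace ℝ K] [CompleteSpace K]

lemma key_lemma (T : H ≃L[ℝ] K)
    (h : ∀ S : H ≃L[ℝ] H,
      ‖(T : H →L[ℝ] K).comp ((S : H →L[ℝ] H).comp (T.symm : K →L[ℝ] H))‖ ≤ ‖(S : H →L[ℝ] H)‖)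
    (v : H) (y : K) (hv : ‖v‖ = 1) (hy : ‖y‖ = 1) :
    ‖T v‖ * ‖T.symm y‖ ≤ 1 := by
  set r := ‖T.symm y‖ with hrdef
  have hy0 : y ≠ 0 := by intro h0; rw [h0, norm_zero] at hy; norm_num at hy
  have hTy0 : T.symm y ≠ 0 := by
    intro h0
    apply hy0
    have := congrArg T h0
    simpa using this
  have hr : 0 < r := norm_pos_iff.mpr hTy0
  set u : H := r⁻¹ • T.symm y with hudef
  have hu : ‖u‖ = 1 := by
    rw [hudef, norm_smul, norm_inv, Real.norm_eq_abs, abs_of_pos hr]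
    field_simp
    exact hrdef.symm
  have huy : (⟪u, T.symm y⟫) = r := by
    rw [hudef, real_inner_smul_left, real_inner_self_eq_norm_sq]
    rw [← hrdef]; field_simp
  set c := ⟪u, v⟫ with hcdef
  set B : H →L[ℝ] H := (innerSL ℝ u).smulRight v with hBdef
  have hB : ∀ x : H, B x = ⟪u, x⟫ • v := fun x => rfl
  have step : ∀ t : ℝ, 0 < t → 1 + t * c ≠ 0 → t * (‖T v‖ * r) ≤ t + 2 := by
    intro t ht htc
    set s := t / (1 + t * c) with hsdef
    set f : H →L[ℝ] H := 1 + t • B with hfdef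
    set g : H →L[ℝ] H := 1 - s • B with hgdef
    have hf : ∀ x : H, f x = x + t • B x := fun x => rfl
    have hg : ∀ x : H, g x = x - s • B x := fun x => rfl
    have hBB : ∀ x : H, B (B x) = (⟪u, x⟫ * c) • v := by
      intro x
      rw [hB, hB, real_inner_smul_right, hcdef, mul_smul]
    have hs' : s * (1 + t * c) = t := by rw [hsdef]; field_simp
    have hgf : Function.LeftInverse g f := by
      intro x
      rw [hf, hg, map_add, map_smul, hBB, hB]
      match_scalars
      all_goals try ring
      all_goals linear_combination (-⟪u, x⟫) * hs'
    have hfg : Function.RightInverse g f := by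
      intro x
      rw [hg, hf, map_sub, map_smul, hBB, hB]
      match_scalars
      all_goals try ring
      all_goals linear_combination (-⟪u, x⟫) * hs'
    set S : H ≃L[ℝ] H := ContinuousLinearEquiv.equivOfInverse f g hgf hfg with hSdef
    have hScoe : (S : H →L[ℝ] H) = f := rfl
    have hfnorm : ‖f‖ ≤ 1 + t := by
      apply ContinuousLinearMap.opNorm_le_bound _ (by linarith)
      intro x
      rw [hf]
      calc ‖x + t • B x‖ ≤ ‖x‖ + ‖t • B x‖ := norm_add_le _ _
        _ ≤ ‖x‖ + t * ‖x‖ := by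
            rw [norm_smul, Real.norm_eq_abs, abs_of_pos ht]
            gcongr
            rw [hB, norm_smul, hv, mul_one, Real.norm_eq_abs]
            calc |⟪u, x⟫| ≤ ‖u‖ * ‖x‖ := abs_real_inner_le_norm u x
              _ = ‖x‖ := by rw [hu, one_mul]
        _ = (1 + t) * ‖x‖ := by ring
    have hA := h S
    rw [hScoe] at hA
    set A := (T : H →L[ℝ] K).comp (f.comp (T.symm : K →L[ℝ] H)) with hAdef
    have hAy : A y = y + (t * r) • T v := by
      rw [hAdef]
      simp only [ContinuousLinearMap.comp_apply, ContinuousLinearEquiv.coe_coe]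
      rw [hf, hB, huy]
      rw [map_add, map_smul, map_smul]
      simp only [ContinuousLinearEquiv.apply_symm_apply]
      rw [smul_smul]
    have h1 : (t * r) * ‖T v‖ ≤ ‖A y‖ + 1 := by
      have := norm_sub_le (y + (t * r) • T v) y
      simp only [add_sub_cancel_left] at this
      rw [norm_smul, Real.norm_eq_abs, abs_of_pos (mul_pos ht hr)] at this
      rw [hAy, hy] at *
      linarith
    have h2 : ‖A y‖ ≤ 1 + t := by
      calc ‖A y‖ ≤ ‖A‖ * ‖y‖ := A.le_opNorm y
        _ = ‖A‖ := by rw [hy, mul_one]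
        _ ≤ ‖f‖ := hA
        _ ≤ 1 + t := hfnorm
    nlinarith
  -- conclude r * ‖T v‖ ≤ 1
  by_contra hgt
  push_neg at hgt
  set a := ‖T v‖ * r with hadef
  have ha : 1 < a := hgt
  -- pick t
  have hcb : |c| ≤ 1 := by
    calc |c| ≤ ‖u‖ * ‖v‖ := abs_real_inner_le_norm u v
      _ = 1 := by rw [hu, hv, one_mul]
  set t0 : ℝ := 2 / (a - 1) + 1 with ht0def
  have ht0 : 0 < t0 := by
    have h2 : (0:ℝ) < 2 / (a - 1) := div_pos two_pos (by linarith)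
    rw [ht0def]
    linarith
  have hpick : ∃ t : ℝ, 0 < t ∧ 1 + t * c ≠ 0 ∧ 2 / (a - 1) < t := by
    by_cases h1 : 1 + t0 * c = 0
    · refine ⟨t0 + 1, by linarith, ?_, by linarith⟩
      intro h2
      have hc0 : c = 0 := by
        have := sub_eq_zero.mpr (h2.trans h1.symm)
        have : c = 0 := by nlinarith [this]
        exact this
      rw [hc0] at h1; norm_num at h1
    · exact ⟨t0, ht0, h1, by linarith⟩
  obtain ⟨t, ht, htc, htbig⟩ := hpick
  have := step t ht htc
  have h2a : 2 < (a - 1) * t := by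
    rw [div_lt_iff₀ (by linarith : (0:ℝ) < a - 1)] at htbig
    linarith
  nlinarith

end

theorem stmt_4 {H K : Type*} [NormedAddCommGroup H] [InnerProductSpace ℝ H] [CompleteSpace H]
    [NormedAddCommGroup K] [InnerProductSpace ℝ K] [CompleteSpace K]
    (T : H ≃L[ℝ] K)
    (h : ∀ S : H ≃L[ℝ] H,
      ‖(T : H →L[ℝ] K).comp ((S : H →L[ℝ] H).comp (T.symm : K →L[ℝ] H))‖ ≤ ‖(S : H →L[ℝ] H)‖) :
    ∀ x : H, ‖T x‖ = ‖(T : H →L[ℝ] K)‖ * ‖x‖ := by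
  intro x
  rcases eq_or_ne x 0 with rfl | hx
  · simp
  have hx0 : (0:ℝ) < ‖x‖ := norm_pos_iff.mpr hx
  have hTx : T x ≠ 0 := by
    intro h0
    apply hx
    have := congrArg T.symm h0
    simpa using this
  have hTx0 : (0:ℝ) < ‖T x‖ := norm_pos_iff.mpr hTx
  have upper : ‖T x‖ ≤ ‖(T : H →L[ℝ] K)‖ * ‖x‖ := (T : H →L[ℝ] K).le_opNorm x
  have lower : ‖(T : H →L[ℝ] K)‖ ≤ ‖T x‖ / ‖x‖ := by
    apply ContinuousLinearMap.opNorm_le_bound _ (by positivity)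
    intro z
    rcases eq_or_ne z 0 with rfl | hz
    · simp
    have hz0 : (0:ℝ) < ‖z‖ := norm_pos_iff.mpr hz
    have hkey := key_lemma T h (‖z‖⁻¹ • z) (‖T x‖⁻¹ • T x)
      (by rw [norm_smul, norm_inv, Real.norm_eq_abs, abs_of_pos hz0]; field_simp)
      (by rw [norm_smul, norm_inv, Real.norm_eq_abs, abs_of_pos hTx0]; field_simp)
    rw [map_smul, map_smul] at hkey
    simp only [ContinuousLinearEquiv.symm_apply_apply] at hkey
    rw [norm_smul, norm_smul, norm_inv, norm_inv, Real.norm_eq_abs, Real.norm_eq_abs,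
      abs_of_pos hz0, abs_of_pos hTx0] at hkey
    have : ‖T z‖ * ‖x‖ ≤ ‖z‖ * ‖T x‖ := by
      have h2 : (‖z‖⁻¹ * ‖T z‖) * (‖T x‖⁻¹ * ‖x‖) ≤ 1 := hkey
      calc ‖T z‖ * ‖x‖ = ((‖z‖⁻¹ * ‖T z‖) * (‖T x‖⁻¹ * ‖x‖)) * (‖z‖ * ‖T x‖) := by
            field_simp
        _ ≤ 1 * (‖z‖ * ‖T x‖) := by
            apply mul_le_mul_of_nonneg_right h2 (by positivity)
        _ = ‖z‖ * ‖T x‖ := one_mul _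
    rw [div_mul_eq_mul_div, le_div_iff₀ hx0]
    have : ‖(T : H →L[ℝ] K) z‖ = ‖T z‖ := rfl
    rw [this]
    linarith
  have lower' : ‖(T : H →L[ℝ] K)‖ * ‖x‖ ≤ ‖T x‖ := by
    rw [div_eq_mul_inv] at lower
    calc ‖(T : H →L[ℝ] K)‖ * ‖x‖ ≤ (‖T x‖ * ‖x‖⁻¹) * ‖x‖ := by
          apply mul_le_mul_of_nonneg_right lower (norm_nonneg x)
      _ = ‖T x‖ := by field_simp
  linarith
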